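/- Recursive feasibility: suppose O ⊆ ℝ^m × ℝⁿ is convex, satisfies (v,e) ∈ O ⇒ (v, λ⁻¹ A_K e) ∈ O with λ ∈ (0,1), and (v,0) ∈ O for all v in a convex set S̄_v. If at time t-1 the pair (v_{t-1}, x_{t-1} - S_K v_{t-1}) ∈ O with v_{t-1} ∈ S̄_v, and x_t = A_K x_{t-1} + B v_{t-1} with A_K S_K = S_K - B (i.e., A_K S_K v = S_K v - B v for all v), then choosing α_t = 0 (v_t = v_{t-1}) yields (v_t, x_t - S_K v_t) ∈ O, so the reference governor optimization is feasible at time t. -/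
import Mathlib


/-- Recursive feasibility (Lemma 2): if `O` is convex, invariant under
`(v,e) ↦ (v, λ⁻¹ A_K e)`, `(v,0) ∈ O` for all `v ∈ S̄_v`, and at time `t-1` we have
`(v_{t-1}, x_{t-1} - S_K v_{t-1}) ∈ O` with `v_{t-1} ∈ S̄_v`,
`x_t = A_K x_{t-1} + B v_{t-1}` and `A_K S_K v = S_K v - B v`, then keeping
`v_t = v_{t-1}` (i.e. `α_t = 0`) gives `(v_t, x_t - S_K v_t) ∈ O`. -/
theorem stmt18 {n m : ℕ}
    (AK : EuclideanSpace ℝ (Fin n) →L[ℝ] EuclideanSpace ℝ (Fin n))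
    (B SK : EuclideanSpace ℝ (Fin m) →L[ℝ] EuclideanSpace ℝ (Fin n))
    (hSK : ∀ w, AK (SK w) = SK w - B w)
    (O : Set ((EuclideanSpace ℝ (Fin m)) × (EuclideanSpace ℝ (Fin n))))
    (hO : Convex ℝ O)
    (lam : ℝ) (hlam : lam ∈ Set.Ioo (0 : ℝ) 1)
    (Sbar : Set (EuclideanSpace ℝ (Fin m))) (hSbarConv : Convex ℝ Sbar)
    (hinv : ∀ v e, (v, e) ∈ O → (v, (1 / lam) • AK e) ∈ O)
    (h0 : ∀ v ∈ Sbar, (v, (0 : EuclideanSpace ℝ (Fin n))) ∈ O)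
    (vprev : EuclideanSpace ℝ (Fin m)) (hvprev : vprev ∈ Sbar)
    (xprev xt : EuclideanSpace ℝ (Fin n))
    (hmem : (vprev, xprev - SK vprev) ∈ O)
    (hxt : xt = AK xprev + B vprev) :
    (vprev, xt - SK vprev) ∈ O := by
  have hlam0 : lam ≠ 0 := ne_of_gt hlam.1
  have hkey : xt - SK vprev = AK (xprev - SK vprev) := by
    rw [hxt, map_sub, hSK]
    abel
  have h1 := hinv _ _ hmem
  have h2 := h0 vprev hvprev
  have h3 : (0:ℝ) ≤ 1 - lam := by linarith [hlam.2]
  have := hO h1 h2 (le_of_lt hlam.1) h3 (by ring)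
  simpa [hkey, Prod.smul_mk, smul_smul, mul_one_div, div_self hlam0, mul_inv_cancel₀ hlam0,
    Convex.combo_self, smul_zero] using this
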